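/- Let x₁, …, x_n ∈ ℝ^p with partition x_i = (x_i^{(1)}, x_i^{(2)}), x_i^{(1)} ∈ ℝ^r, let M be an r×r real symmetric positive semidefinite matrix, β ∈ ℝ^p, σ > 0, c > 0, and define for t ∈ ℝⁿ the map IF₂(t) = c · Σ_{i=1}^n ( x_i^{(1)ᵀ} M x_i^{(1)} ) (t_i − x_iᵀβ)² exp( −τ (t_i − x_iᵀβ)² / σ² ). Then IF₂(t) ≥ 0 for all t; if τ > 0 then IF₂ is bounded on ℝⁿ, with sup_t IF₂(t) ≤ c (σ²/(τe)) Σ_{i=1}^n x_i^{(1)ᵀ} M x_i^{(1)}; and if τ = 0 and x_i^{(1)ᵀ} M x_i^{(1)} > 0 for at least one i, then IF₂ is unbounded on ℝⁿ. -/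

import Mathlib

open Matrix Real

lemma aux_sq_exp_bound (σ τ y : ℝ) (hσ : 0 < σ) (hτ : 0 < τ) :
    y ^ 2 * Real.exp (-(τ * y ^ 2) / σ ^ 2) ≤ σ ^ 2 / (τ * Real.exp 1) := by
  set u : ℝ := τ * y ^ 2 / σ ^ 2 with hu
  have hσ2 : (0:ℝ) < σ ^ 2 := by positivity
  have hu0 : 0 ≤ u := by positivity
  have h1 : u ≤ Real.exp (u - 1) := by
    have := Real.add_one_le_exp (u - 1)
    linarith
  have h2 : u * Real.exp (-u) ≤ Real.exp (-1 : ℝ) := by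
    calc u * Real.exp (-u) ≤ Real.exp (u - 1) * Real.exp (-u) := by
          apply mul_le_mul_of_nonneg_right h1 (Real.exp_nonneg _)
      _ = Real.exp (-1 : ℝ) := by rw [← Real.exp_add]; ring_nf
  have key : y ^ 2 * Real.exp (-u) = (σ ^ 2 / τ) * (u * Real.exp (-u)) := by
    field_simp [hu]
    rw [hu, div_mul_cancel₀ _ hσ2.ne']
    ring
  have : -(τ * y ^ 2) / σ ^ 2 = -u := by field_simp [hu]; rw [hu, mul_div_cancel₀ _ hσ2.ne']
  rw [this, key]
  have : (σ ^ 2 / τ) * (u * Real.exp (-u)) ≤ (σ ^ 2 / τ) * Real.exp (-1 : ℝ) := by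
    apply mul_le_mul_of_nonneg_left h2 (by positivity)
  calc (σ ^ 2 / τ) * (u * Real.exp (-u)) ≤ (σ ^ 2 / τ) * Real.exp (-1 : ℝ) := this
    _ = σ ^ 2 / (τ * Real.exp 1) := by
        rw [Real.exp_neg]
        field_simp

theorem dpd_test_second_order_IF_boundedness
    {n r s : ℕ}
    (x1 : Fin n → Fin r → ℝ) (x2 : Fin n → Fin s → ℝ)            -- xᵢ = (xᵢ⁽¹⁾, xᵢ⁽²⁾)
    (M : Matrix (Fin r) (Fin r) ℝ) (hM : M.PosSemidef)
    (β1 : Fin r → ℝ) (β2 : Fin s → ℝ)                            -- β = (β⁽¹⁾, β⁽²⁾)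
    (σ τ c : ℝ) (hσ : 0 < σ) (hc : 0 < c) (hτ : 0 ≤ τ) :
    let xb : Fin n → ℝ := fun i => x1 i ⬝ᵥ β1 + x2 i ⬝ᵥ β2       -- xᵢᵀβ
    let q : Fin n → ℝ := fun i => x1 i ⬝ᵥ M.mulVec (x1 i)        -- xᵢ⁽¹⁾ᵀ M xᵢ⁽¹⁾
    let IF₂ : (Fin n → ℝ) → ℝ := fun t =>
      c * ∑ i, q i * (t i - xb i) ^ 2 *
        Real.exp (-(τ * (t i - xb i) ^ 2) / σ ^ 2)
    ((∀ t : Fin n → ℝ, 0 ≤ IF₂ t) ∧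
      (0 < τ → ∀ t : Fin n → ℝ, IF₂ t ≤ c * (σ ^ 2 / (τ * Real.exp 1)) * ∑ i, q i) ∧
      (τ = 0 → (∃ i, 0 < q i) → ∀ C : ℝ, ∃ t : Fin n → ℝ, C < IF₂ t)) := by
  intro xb q IF₂
  have hq : ∀ i, 0 ≤ q i := fun i => hM.dotProduct_mulVec_nonneg (x1 i)
  refine ⟨?_, ?_, ?_⟩
  · intro t
    apply mul_nonneg hc.le
    apply Finset.sum_nonneg
    intro i _
    have := hq i
    positivity
  · intro hτ' t
    rw [mul_assoc, Finset.mul_sum]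
    apply mul_le_mul_of_nonneg_left _ hc.le
    apply Finset.sum_le_sum
    intro i _
    rw [mul_assoc, mul_comm (σ ^ 2 / (τ * Real.exp 1)) (q i)]
    exact mul_le_mul_of_nonneg_left (aux_sq_exp_bound σ τ _ hσ hτ') (hq i)
  · intro hτ0 ⟨i₀, hi₀⟩ C
    set R : ℝ := Real.sqrt ((|C| + 1) / (c * q i₀)) with hR
    refine ⟨Function.update xb i₀ (xb i₀ + R), ?_⟩
    have hsum : ∑ i, q i * (Function.update xb i₀ (xb i₀ + R) i - xb i) ^ 2 *
        Real.exp (-(τ * (Function.update xb i₀ (xb i₀ + R) i - xb i) ^ 2) / σ ^ 2)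
        = q i₀ * R ^ 2 := by
      rw [Finset.sum_eq_single i₀]
      · rw [Function.update_self, hτ0]
        simp
      · intro j _ hj
        rw [Function.update_of_ne hj]
        simp
      · intro h; exact absurd (Finset.mem_univ i₀) h
    show C < c * _
    rw [hsum]
    have hcq : 0 < c * q i₀ := mul_pos hc hi₀
    have hR2 : R ^ 2 = (|C| + 1) / (c * q i₀) := by
      rw [hR, Real.sq_sqrt (by positivity)]
    rw [show c * (q i₀ * R ^ 2) = (c * q i₀) * R ^ 2 by ring, hR2,
      mul_div_cancel₀ _ hcq.ne']
    calc C ≤ |C| := le_abs_self C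
      _ < |C| + 1 := by linarith
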